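/- In the game Nim ⊙ Euclid (players play 2-heap Nim until one pushes the button, after which they play Euclid — remove a positive multiple of the smaller heap from the larger, heaps staying positive, with the extra rule that from (0,i), i>0, the only move is to (0,0); last player to move wins), the position (0,1) is a P-position, and for every n ≥ 1 every pair (a,b) with 0 < a ≤ b and b = ⌈Φ·a⌉ where (a,b) is either a Wythoff pair not of the form (F_{2k+1}−1, F_{2k+2}−1), or of the form (F_{2k+2}−1, F_{2k+3}−1), is a P-position of Nim ⊙ Euclid. -/

import Mathlib

open Real goldenRatio
open scoped symmDiff

noncomputable def Φ : ℝ := (1 + Real.sqrt 5) / 2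

lemma phi_eq : Φ = goldenRatio := rfl
lemma one_lt_phi : 1 < Φ := one_lt_goldenRatio
lemma phi_lt_two : Φ < 2 := goldenRatio_lt_two
lemma phi_pos : 0 < Φ := goldenRatio_pos
lemma phi_sq : Φ^2 = Φ + 1 := goldenRatio_sq
lemma phi_psi : Φ + ψ = 1 := goldenRatio_add_goldenConj
lemma psi_sq : ψ^2 = ψ + 1 := goldenConj_sq
lemma psi_neg : ψ < 0 := goldenConj_neg
lemma neg_one_lt_psi : -1 < ψ := neg_one_lt_goldenConj
lemma psi_sq_pos : 0 < ψ^2 := by nlinarith [psi_neg]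
lemma psi_sq_lt_one : ψ^2 < 1 := by nlinarith [psi_neg, neg_one_lt_psi]
lemma phi_add_psi_sq : Φ + ψ^2 = 2 := by have := psi_sq; have := phi_psi; linarith

lemma phi_irr : Irrational Φ := goldenRatio_irrational
lemma phi_mul_nat_irr {a : ℕ} (ha : 0 < a) : Irrational (Φ * a) := by
  have := phi_irr.ratCast_mul (q := a) (by exact_mod_cast ha.ne')
  simpa using this

lemma fib_binet (n : ℕ) : Φ * Nat.fib n = Nat.fib (n+1) - ψ^n := by
  have := fib_succ_sub_goldenRatio_mul_fib n
  rw [phi_eq]; linarith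

lemma psi_even_pos (k : ℕ) : 0 < ψ^(2*k) := by
  rw [pow_mul]; exact pow_pos psi_sq_pos k
lemma psi_even_le_one (k : ℕ) : ψ^(2*k) ≤ 1 := by
  rw [pow_mul]; exact pow_le_one₀ psi_sq_pos.le psi_sq_lt_one.le
lemma psi_even_lt_sq {k : ℕ} (hk : 2 ≤ k) : ψ^(2*k) < ψ^2 := by
  rw [pow_mul]
  have h := pow_lt_pow_right_of_lt_one₀ psi_sq_pos psi_sq_lt_one (show 1 < k by omega)
  simpa using h
lemma psi_odd_neg (k : ℕ) : ψ^(2*k+1) < 0 := by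
  have h1 := psi_even_pos k
  have h2 : ψ^(2*k+1) = ψ^(2*k) * ψ := by ring
  nlinarith [psi_neg]
lemma psi_odd_ge (k : ℕ) : ψ ≤ ψ^(2*k+1) := by
  have h1 := psi_even_pos k
  have h2 := psi_even_le_one k
  have h3 : ψ^(2*k+1) = ψ^(2*k) * ψ := by ring
  nlinarith [psi_neg]

-- generic facts
lemma irr_lt_ceil {x : ℝ} (hx : Irrational x) : x < ⌈x⌉ :=
  (Int.le_ceil x).lt_of_ne (fun h => hx.ne_int ⌈x⌉ h)
lemma irr_floor_lt {x : ℝ} (hx : Irrational x) : (⌊x⌋ : ℝ) < x :=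
  (Int.floor_le x).lt_of_ne (fun h => hx.ne_int ⌊x⌋ h.symm)

lemma ceil_gt {a : ℕ} (ha : 0 < a) : Φ * a < ⌈Φ * (a:ℝ)⌉ := irr_lt_ceil (phi_mul_nat_irr ha)
lemma ceil_two_le {a : ℕ} (ha : 0 < a) : 2 ≤ ⌈Φ * (a:ℝ)⌉ := by
  have h : (1:ℝ) < Φ * a := by
    have : (1:ℝ) ≤ a := by exact_mod_cast ha
    nlinarith [one_lt_phi]
  have : (1:ℤ) < ⌈Φ * (a:ℝ)⌉ := Int.lt_ceil.mpr (by exact_mod_cast h)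
  omega

lemma ceil_strict_mono {a b : ℕ} (hab : a < b) : ⌈Φ * (a:ℝ)⌉ < ⌈Φ * (b:ℝ)⌉ := by
  have h1 : (⌈Φ * (a:ℝ)⌉ : ℝ) < Φ * a + 1 := Int.ceil_lt_add_one _
  have h2 : Φ * a + Φ ≤ Φ * b := by
    have : (a:ℝ) + 1 ≤ b := by exact_mod_cast hab
    nlinarith [phi_pos]
  have h3 : (Φ : ℝ) * b ≤ ⌈Φ * (b:ℝ)⌉ := Int.le_ceil _
  have : (⌈Φ * (a:ℝ)⌉ : ℝ) < ⌈Φ * (b:ℝ)⌉ := by nlinarith [one_lt_phi]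
  exact_mod_cast this

lemma ceil_of_floor {a m : ℕ} (hm : 0 < m) (ha : (a:ℤ) = ⌊Φ * (m:ℝ)⌋) :
    (⌈Φ * (a:ℝ)⌉ : ℤ) = a + m := by
  have hirr := phi_mul_nat_irr hm
  have h1 : (a:ℝ) = (⌊Φ * (m:ℝ)⌋ : ℝ) := by exact_mod_cast ha
  have hf1 : (a:ℝ) < Φ * m := h1 ▸ irr_floor_lt hirr
  have hf2 : Φ * m < a + 1 := by
    have := Int.lt_floor_add_one (Φ * (m:ℝ)); rw [← h1] at this; linarith
  have key : Φ * a = (a + m : ℝ) - (Φ - 1) * (Φ * m - a) := by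
    have : Φ * (Φ * m) = Φ * m + m := by nlinarith [phi_sq]
    nlinarith
  rw [Int.ceil_eq_iff]
  constructor
  · push_cast
    rw [key]
    nlinarith [one_lt_phi, phi_lt_two]
  · push_cast
    rw [key]
    nlinarith [one_lt_phi, phi_lt_two]

lemma floor_mul_le_of_lt {m m' : ℕ} (h : m ≤ m') : ⌊Φ * (m:ℝ)⌋ ≤ ⌊Φ * (m':ℝ)⌋ := by
  apply Int.floor_le_floor
  have : (m:ℝ) ≤ m' := by exact_mod_cast h
  nlinarith [phi_pos]

lemma floorsum_inj {m m' : ℕ} (h : ⌊Φ * (m:ℝ)⌋ + m = ⌊Φ * (m':ℝ)⌋ + m') : m = m' := by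
  rcases lt_trichotomy m m' with hlt | he | hlt
  · have := floor_mul_le_of_lt hlt.le; omega
  · exact he
  · have := floor_mul_le_of_lt hlt.le; omega

-- Fibonacci ceil/floor identities
lemma cast_fib_sub_one (n : ℕ) (hn : 1 ≤ n) :
    ((Nat.fib n - 1 : ℕ) : ℝ) = (Nat.fib n : ℝ) - 1 := by
  have : 1 ≤ Nat.fib n := Nat.fib_pos.mpr hn
  push_cast [this]; ring

lemma ceil_fib_even (k : ℕ) (hk : 1 ≤ k) :
    (⌈Φ * ((Nat.fib (2*k+2) - 1 : ℕ) : ℝ)⌉ : ℤ) = (Nat.fib (2*k+3) : ℤ) - 1 := by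
  rw [cast_fib_sub_one _ (by omega)]
  have hb := fib_binet (2*k+2)
  have e : 2*(k+1) = 2*k+2 := by ring
  have h1 : 0 < ψ^(2*k+2) := by rw [← e]; exact psi_even_pos (k+1)
  have h2 : ψ^(2*k+2) < ψ^2 := by rw [← e]; exact psi_even_lt_sq (by omega)
  rw [Int.ceil_eq_iff]
  constructor <;> push_cast <;> nlinarith [one_lt_phi, phi_add_psi_sq]

lemma ceil_fib_odd (k : ℕ) :
    (⌈Φ * ((Nat.fib (2*k+3) - 1 : ℕ) : ℝ)⌉ : ℤ) = (Nat.fib (2*k+4) : ℤ) - 1 := by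
  rw [cast_fib_sub_one _ (by omega)]
  have hb := fib_binet (2*k+3)
  have e : 2*(k+1)+1 = 2*k+3 := by ring
  have h1 : ψ^(2*k+3) < 0 := by rw [← e]; exact psi_odd_neg (k+1)
  have h2 : ψ ≤ ψ^(2*k+3) := by rw [← e]; exact psi_odd_ge (k+1)
  rw [Int.ceil_eq_iff]
  constructor <;> push_cast <;> nlinarith [one_lt_phi, phi_lt_two, phi_psi]

lemma floor_fib_even (k : ℕ) (hk : 1 ≤ k) :
    (⌊Φ * (Nat.fib (2*k) : ℝ)⌋ : ℤ) = (Nat.fib (2*k+1) : ℤ) - 1 := by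
  have hb := fib_binet (2*k)
  have h1 := psi_even_pos k
  have h2 := psi_even_le_one k
  rw [Int.floor_eq_iff]
  constructor <;> push_cast <;> nlinarith

-- Beatty
lemma conj_exp : Φ.HolderConjugate (Φ + 1) := by
  rw [Real.holderConjugate_iff]
  constructor
  · exact one_lt_phi
  · have h5 : Real.sqrt 5 ^ 2 = 5 := Real.sq_sqrt (by norm_num)
    have h : (0:ℝ) < 1 + Real.sqrt 5 := by positivity
    unfold Φ
    field_simp
    nlinarith [h5]

lemma beatty_memA (m : ℕ) (hm : 0 < m) (n : ℤ) (hn : n = ⌊Φ * (m:ℝ)⌋) :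
    n ∈ {x : ℤ | ∃ k, k > 0 ∧ beattySeq Φ k = x} := by
  refine ⟨(m:ℤ), by exact_mod_cast hm, ?_⟩
  rw [beattySeq, hn, mul_comm]
  norm_num

lemma beatty_memB (m : ℕ) (hm : 0 < m) (n : ℤ) (hn : n = ⌊Φ * (m:ℝ)⌋ + m) :
    n ∈ {x : ℤ | ∃ k, k > 0 ∧ beattySeq (Φ + 1) k = x} := by
  refine ⟨(m:ℤ), by exact_mod_cast hm, ?_⟩
  rw [beattySeq, hn]
  have : ((m:ℤ):ℝ) * (Φ + 1) = Φ * m + ((m:ℕ):ℤ) := by push_cast; ring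
  rw [this, Int.floor_add_intCast]

lemma beatty_sd : {x : ℤ | ∃ k, k > 0 ∧ beattySeq Φ k = x} ∆
    {x : ℤ | ∃ k, k > 0 ∧ beattySeq (Φ+1) k = x} = {n : ℤ | 0 < n} :=
  phi_irr.beattySeq_symmDiff_beattySeq_pos conj_exp

lemma beatty_cases (n : ℕ) (hn : 0 < n) :
    (∃ m : ℕ, 0 < m ∧ (n:ℤ) = ⌊Φ * (m:ℝ)⌋) ∨ (∃ m : ℕ, 0 < m ∧ (n:ℤ) = ⌊Φ * (m:ℝ)⌋ + m) := by
  have hmem : (n:ℤ) ∈ {x : ℤ | 0 < x} := by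
    simp only [Set.mem_setOf_eq]; exact_mod_cast hn
  rw [← beatty_sd, Set.mem_symmDiff] at hmem
  rcases hmem with ⟨⟨k, hk, hbk⟩, -⟩ | ⟨⟨k, hk, hbk⟩, -⟩
  · left
    refine ⟨k.toNat, by omega, ?_⟩
    rw [← hbk, beattySeq, mul_comm]
    congr 2
    exact_mod_cast (Int.toNat_of_nonneg hk.le).symm
  · right
    refine ⟨k.toNat, by omega, ?_⟩
    have hc : ((k.toNat : ℕ) : ℝ) = (k:ℝ) := by exact_mod_cast Int.toNat_of_nonneg hk.le
    have h2 : (k:ℝ) * (Φ + 1) = Φ * ((k.toNat : ℕ):ℝ) + (((k.toNat:ℕ) : ℤ):ℝ) := by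
      push_cast [Int.toNat_of_nonneg hk.le]; rw [hc]; ring
    rw [← hbk, beattySeq, h2, Int.floor_add_intCast]

lemma beatty_not_both {n : ℕ} (h1 : ∃ m : ℕ, 0 < m ∧ (n:ℤ) = ⌊Φ * (m:ℝ)⌋)
    (h2 : ∃ m : ℕ, 0 < m ∧ (n:ℤ) = ⌊Φ * (m:ℝ)⌋ + m) : False := by
  obtain ⟨m, hm, e1⟩ := h1
  obtain ⟨m', hm', e2⟩ := h2
  have hn : 0 < (n:ℤ) := by
    have h1a : (1:ℝ) ≤ Φ * m := by
      have : (1:ℝ) ≤ m := by exact_mod_cast hm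
      nlinarith [one_lt_phi]
    have : (1:ℤ) ≤ ⌊Φ * (m:ℝ)⌋ := Int.le_floor.mpr (by exact_mod_cast h1a)
    omega
  have hmem : (n:ℤ) ∈ {x : ℤ | 0 < x} := hn
  rw [← beatty_sd, Set.mem_symmDiff] at hmem
  have hA := beatty_memA m hm _ e1
  have hB := beatty_memB m' hm' _ e2
  tauto

lemma fib_lt_of_lt {i j : ℕ} (hi : 2 ≤ i) (hij : i < j) : Nat.fib i < Nat.fib j :=
  lt_of_lt_of_le (Nat.fib_lt_fib_succ hi) (Nat.fib_mono hij)

lemma fib_inj {i j : ℕ} (hi : 2 ≤ i) (hj : 2 ≤ j) (h : Nat.fib i = Nat.fib j) : i = j := by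
  rcases lt_trichotomy i j with hlt | he | hlt
  · exact absurd h (fib_lt_of_lt hi hlt).ne
  · exact he
  · exact absurd h.symm (fib_lt_of_lt hj hlt).ne

def IsWP (a b : ℕ) : Prop :=
  (a = 0 ∧ b = 1) ∨
  (0 < a ∧ (b : ℤ) = ⌈Φ * (a : ℝ)⌉ ∧
    (((∃ m : ℕ, (a : ℤ) = ⌊Φ * (m : ℝ)⌋ ∧ b = a + m) ∧
        ¬ ∃ k : ℕ, a = Nat.fib (2 * k + 1) - 1 ∧ b = Nat.fib (2 * k + 2) - 1) ∨
      (∃ k : ℕ, a = Nat.fib (2 * k + 2) - 1 ∧ b = Nat.fib (2 * k + 3) - 1)))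

lemma WP_m_pos {a m : ℕ} (ha : 0 < a) (h : (a:ℤ) = ⌊Φ * (m:ℝ)⌋) : 0 < m := by
  rcases Nat.eq_zero_or_pos m with rfl | h'
  · simp at h; omega
  · exact h'

lemma small_pos_ceil {a b : ℕ} (h : IsWP a b) (ha : 0 < a) : (b:ℤ) = ⌈Φ * (a:ℝ)⌉ := by
  rcases h with ⟨rfl, _⟩ | ⟨_, hc, _⟩
  · omega
  · exact hc

lemma zero_pair {b : ℕ} (h : IsWP 0 b) : b = 1 := by
  rcases h with ⟨_, rfl⟩ | ⟨h, _⟩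
  · rfl
  · omega

lemma pair_lt {a b : ℕ} (h : IsWP a b) : a < b := by
  rcases Nat.eq_zero_or_pos a with rfl | ha
  · have := zero_pair h; omega
  · have hc := small_pos_ceil h ha
    have h1 : Φ * a < ⌈Φ * (a:ℝ)⌉ := ceil_gt ha
    have h2 : (a:ℝ) < Φ * a := by
      have : (1:ℝ) ≤ a := by exact_mod_cast ha
      nlinarith [one_lt_phi]
    have : (a:ℝ) < ((b:ℤ):ℝ) := by rw [hc]; linarith
    have : (a:ℤ) < (b:ℤ) := by exact_mod_cast this
    omega

lemma small_unique {a b c : ℕ} (h1 : IsWP a b) (h2 : IsWP a c) : b = c := by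
  rcases Nat.eq_zero_or_pos a with rfl | ha
  · rw [zero_pair h1, zero_pair h2]
  · have e1 := small_pos_ceil h1 ha
    have e2 := small_pos_ceil h2 ha
    omega

lemma big_unique {a b c : ℕ} (h1 : IsWP a c) (h2 : IsWP b c) : a = b := by
  rcases Nat.eq_zero_or_pos a with rfl | ha
  · have h := zero_pair h1
    rcases Nat.eq_zero_or_pos b with rfl | hb
    · rfl
    · have := small_pos_ceil h2 hb
      have := ceil_two_le hb
      omega
  · rcases Nat.eq_zero_or_pos b with rfl | hb
    · have h := zero_pair h2
      have := small_pos_ceil h1 ha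
      have := ceil_two_le ha
      omega
    · have e1 := small_pos_ceil h1 ha
      have e2 := small_pos_ceil h2 hb
      rcases lt_trichotomy a b with hlt | he | hlt
      · have := ceil_strict_mono hlt; omega
      · exact he
      · have := ceil_strict_mono hlt; omega

lemma ceil_one : ⌈Φ * ((1:ℕ):ℝ)⌉ = 2 := by
  rw [Int.ceil_eq_iff]
  constructor <;> push_cast <;> nlinarith [one_lt_phi, phi_lt_two]

lemma one_not_small {c : ℕ} : ¬ IsWP 1 c := by
  intro h
  rcases h with ⟨h, _⟩ | ⟨-, hc, hbr⟩
  · omega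
  · rw [ceil_one] at hc
    have hc2 : c = 2 := by omega
    subst hc2
    rcases hbr with ⟨-, hex⟩ | ⟨k, h1, h2⟩
    · exact hex ⟨1, by simp [Nat.fib], by simp [Nat.fib]⟩
    · have hp : 0 < Nat.fib (2*k+2) := Nat.fib_pos.mpr (by omega)
      have : Nat.fib (2*k+2) = 2 := by omega
      have h4 : (2:ℕ) = Nat.fib 3 := by simp [Nat.fib]
      have := fib_inj (i := 2*k+2) (j := 3) (by omega) (by omega) (by rw [this]; exact h4.symm)
      omega

lemma cross {a b c : ℕ} (h1 : IsWP a b) (h2 : IsWP b c) : False := by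
  rcases h1 with ⟨rfl, rfl⟩ | ⟨ha, hb, hbr1⟩
  · exact one_not_small h2
  · have hb2 : 2 ≤ b := by have := ceil_two_le ha; omega
    rcases h2 with ⟨h, _⟩ | ⟨hbpos, hc, hbr2⟩
    · omega
    rcases hbr1 with ⟨⟨m, ham, hbm⟩, hex1⟩ | ⟨k, hak, hbk⟩
    · -- (a,b) Wythoff pair
      have hm : 0 < m := WP_m_pos ha ham
      have hbsum : (b:ℤ) = ⌊Φ * (m:ℝ)⌋ + m := by
        rw [hbm]; push_cast; omega
      rcases hbr2 with ⟨⟨m', hbm', -⟩, -⟩ | ⟨k, hbk, -⟩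
      · -- b also small Wythoff: Beatty contradiction
        exact beatty_not_both ⟨m', WP_m_pos hbpos hbm', hbm'⟩ ⟨m, hm, hbsum⟩
      · -- b = fib (2k+2) - 1: then (a,b) is the excluded pair
        have hfp : 0 < Nat.fib (2*k+2) := Nat.fib_pos.mpr (by omega)
        have hk1 : 1 ≤ k := by
          by_contra h
          have hk0 : k = 0 := by omega
          subst hk0
          simp [Nat.fib] at hbk
          omega
        have hval : (⌊Φ * (Nat.fib (2*k) : ℝ)⌋ : ℤ) + Nat.fib (2*k) = (b:ℤ) := by
          rw [floor_fib_even k hk1]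
          have : Nat.fib (2*k+2) = Nat.fib (2*k) + Nat.fib (2*k+1) := by
            rw [Nat.fib_add_two]
          have hf1 : 0 < Nat.fib (2*k+1) := Nat.fib_pos.mpr (by omega)
          subst hbk
          push_cast [Nat.cast_sub hfp]
          push_cast at this ⊢
          omega
        have hmeq : m = Nat.fib (2*k) := floorsum_inj (by omega)
        subst hmeq
        have haeq : (a:ℤ) = (Nat.fib (2*k+1) : ℤ) - 1 := by
          rw [ham, floor_fib_even k hk1]
        have hf1 : 0 < Nat.fib (2*k+1) := Nat.fib_pos.mpr (by omega)
        exact hex1 ⟨k, by omega, hbk⟩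
    · -- (a,b) = (fib(2k+2)-1, fib(2k+3)-1)
      have hf3 : 0 < Nat.fib (2*k+3) := Nat.fib_pos.mpr (by omega)
      have hf4 : 0 < Nat.fib (2*k+4) := Nat.fib_pos.mpr (by omega)
      rcases hbr2 with ⟨-, hex2⟩ | ⟨k', hbk', -⟩
      · -- (b,c) would be the excluded pair (fib(2k+3)-1, fib(2k+4)-1)
        apply hex2
        refine ⟨k+1, ?_, ?_⟩
        · rw [show 2*(k+1)+1 = 2*k+3 from by ring]; exact hbk
        · have hcz : (c:ℤ) = (Nat.fib (2*k+4) : ℤ) - 1 := by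
            rw [hc, hbk]; exact ceil_fib_odd k
          rw [show 2*(k+1)+2 = 2*k+4 from by ring]
          omega
      · -- b = fib(2k+3)-1 = fib(2k'+2)-1 : parity contradiction
        have hp1 : 0 < Nat.fib (2*k'+2) := Nat.fib_pos.mpr (by omega)
        have heq : Nat.fib (2*k+3) = Nat.fib (2*k'+2) := by omega
        have hk'1 : 1 ≤ k' := by
          by_contra h
          have : k' = 0 := by omega
          subst this
          have h2' : Nat.fib (2*0+2) = 1 := by norm_num
          omega
        have := fib_inj (i := 2*k+3) (j := 2*k'+2) (by omega) (by omega) heq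
        omega

lemma fib_ge_four {j : ℕ} (h : 3 ≤ Nat.fib j) : 4 ≤ j := by
  by_contra hj
  interval_cases j <;> simp_all [Nat.fib]

lemma partner (n : ℕ) : ∃ b, IsWP n b ∨ IsWP b n := by
  rcases Nat.eq_zero_or_pos n with rfl | hn
  · exact ⟨1, Or.inl (Or.inl ⟨rfl, rfl⟩)⟩
  rcases Nat.lt_or_ge n 2 with hn2 | hn2
  · have : n = 1 := by omega
    subst this
    exact ⟨0, Or.inr (Or.inl ⟨rfl, rfl⟩)⟩
  by_cases hf : ∃ j, Nat.fib j = n + 1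
  · obtain ⟨j, hj⟩ := hf
    have hj4 : 4 ≤ j := fib_ge_four (by omega)
    rcases Nat.even_or_odd j with ⟨k, hk⟩ | ⟨k, hk⟩
    · -- j = 2k, k ≥ 2 : n = fib(2(k-1)+2)-1, small of a replaced pair
      have hk2 : 2 ≤ k := by omega
      set k' := k - 1 with hk'
      have e2 : 2*k'+2 = j := by omega
      have e3 : 2*k'+3 = j+1 := by omega
      have hfp : 0 < Nat.fib (j+1) := Nat.fib_pos.mpr (by omega)
      refine ⟨Nat.fib (j+1) - 1, Or.inl (Or.inr ⟨hn, ?_, Or.inr ⟨k', by rw [e2]; omega, by rw [e3]⟩⟩)⟩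
      have hcc := ceil_fib_even k' (by omega)
      rw [e2] at hcc
      have hna : n = Nat.fib j - 1 := by omega
      rw [hna]
      rw [hcc, e3]
      push_cast [hfp]
      omega
    · -- j = 2k+1, k ≥ 2 : n = fib(2(k-1)+3)-1 is big of replaced pair (fib(2k)-1, n)
      have hk2 : 2 ≤ k := by omega
      set k' := k - 1 with hk'
      have e2 : 2*k'+2 = 2*k := by omega
      have e3 : 2*k'+3 = j := by omega
      have hf2k : 3 ≤ Nat.fib (2*k) := by
        calc 3 = Nat.fib 4 := by norm_num
        _ ≤ Nat.fib (2*k) := Nat.fib_mono (by omega)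
      refine ⟨Nat.fib (2*k) - 1, Or.inr (Or.inr ⟨by omega, ?_, Or.inr ⟨k', by rw [e2], by rw [e3]; omega⟩⟩)⟩
      have hcc := ceil_fib_even k' (by omega)
      rw [e2, e3] at hcc
      rw [hcc]
      have hfj : 0 < Nat.fib j := by omega
      push_cast [hfj]
      omega
  · -- n+1 not a Fibonacci number: Wythoff pairs
    rcases beatty_cases n hn with ⟨m, hm, hnm⟩ | ⟨m, hm, hnm⟩
    · refine ⟨n + m, Or.inl (Or.inr ⟨hn, ?_, Or.inl ⟨⟨m, hnm, rfl⟩, ?_⟩⟩)⟩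
      · rw [ceil_of_floor hm hnm]; push_cast; ring
      · rintro ⟨k, h1, h2⟩
        have : 0 < Nat.fib (2*k+1) := Nat.fib_pos.mpr (by omega)
        exact hf ⟨2*k+1, by omega⟩
    · have hfl : (1:ℤ) ≤ ⌊Φ * (m:ℝ)⌋ := by
        apply Int.le_floor.mpr
        have : (1:ℝ) ≤ m := by exact_mod_cast hm
        push_cast
        nlinarith [one_lt_phi]
      have hmn : m < n := by omega
      set a := n - m with ha
      have haz : (a:ℤ) = ⌊Φ * (m:ℝ)⌋ := by
        have : ((n - m : ℕ) : ℤ) = (n:ℤ) - m := by push_cast [hmn.le]; ring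
        omega
      have hapos : 0 < a := by omega
      refine ⟨a, Or.inr (Or.inr ⟨hapos, ?_, Or.inl ⟨⟨m, haz, by omega⟩, ?_⟩⟩)⟩
      · rw [ceil_of_floor hm haz]; omega
      · rintro ⟨k, h1, h2⟩
        have : 0 < Nat.fib (2*k+2) := Nat.fib_pos.mpr (by omega)
        exact hf ⟨2*k+2, by omega⟩

def euclidMove (p q : ℕ × ℕ) : Prop :=
  (p.1 = 0 ∧ 0 < p.2 ∧ q = (0, 0)) ∨
  (p.2 = 0 ∧ 0 < p.1 ∧ q = (0, 0)) ∨
  (0 < p.1 ∧ p.1 ≤ p.2 ∧ ∃ k, 1 ≤ k ∧ 0 < p.2 - k * p.1 ∧ q = (p.1, p.2 - k * p.1)) ∨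
  (0 < p.2 ∧ p.2 < p.1 ∧ ∃ k, 1 ≤ k ∧ 0 < p.1 - k * p.2 ∧ q = (p.1 - k * p.2, p.2))

def nimMove (p q : ℕ × ℕ) : Prop :=
  (q.1 < p.1 ∧ q.2 = p.2) ∨ (q.2 < p.2 ∧ q.1 = p.1)

def nimPushEuclidMove (p q : Bool × (ℕ × ℕ)) : Prop :=
  (p.1 = true ∧ ((q.1 = true ∧ nimMove p.2 q.2) ∨ q = (false, p.2))) ∨
  (p.1 = false ∧ q.1 = false ∧ euclidMove p.2 q.2)

def EP (p : ℕ × ℕ) : Prop :=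
  (p.1 = 0 ∧ p.2 = 0) ∨
  (0 < p.1 ∧ p.1 ≤ p.2 ∧ (p.2:ℝ) < Φ * p.1) ∨
  (0 < p.2 ∧ p.2 < p.1 ∧ (p.1:ℝ) < Φ * p.2)

lemma EP_swap {a b : ℕ} (h : EP (a,b)) : EP (b,a) := by
  simp only [EP] at h ⊢
  rcases h with ⟨h1, h2⟩ | ⟨h1, h2, h3⟩ | ⟨h1, h2, h3⟩
  · exact Or.inl ⟨h2, h1⟩
  · rcases eq_or_lt_of_le h2 with he | hlt
    · subst he; exact Or.inr (Or.inl ⟨h1, le_refl _, h3⟩)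
    · exact Or.inr (Or.inr ⟨h1, hlt, h3⟩)
  · exact Or.inr (Or.inl ⟨h1, h2.le, h3⟩)

lemma euclidMove_swap {a b : ℕ} {q : ℕ × ℕ} (h : euclidMove (a,b) q) :
    euclidMove (b,a) (q.2, q.1) := by
  simp only [euclidMove] at h ⊢
  rcases h with ⟨h1, h2, h3⟩ | ⟨h1, h2, h3⟩ | ⟨h1, h2, k, hk, hpos, h3⟩ | ⟨h1, h2, k, hk, hpos, h3⟩
  · subst h3; exact Or.inr (Or.inl ⟨h1, h2, rfl⟩)
  · subst h3; exact Or.inl ⟨h1, h2, rfl⟩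
  · subst h3
    rcases eq_or_lt_of_le h2 with he | hlt
    · exfalso
      have hka : a ≤ k * a := Nat.le_mul_of_pos_left a (by omega)
      omega
    · exact Or.inr (Or.inr (Or.inr ⟨h1, hlt, k, hk, hpos, rfl⟩))
  · subst h3
    exact Or.inr (Or.inr (Or.inl ⟨h1, h2.le, k, hk, hpos, rfl⟩))

lemma E_sound_le {a b : ℕ} {q : ℕ × ℕ} (ha : 0 < a) (hab : a ≤ b) (hlt : (b:ℝ) < Φ * a)
    (hm : euclidMove (a,b) q) : ¬ EP q := by
  have hb2a : (b:ℝ) < 2 * a := by nlinarith [phi_lt_two, (by exact_mod_cast ha : (0:ℝ) < (a:ℝ))]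
  have hb2a' : b < 2 * a := by exact_mod_cast hb2a
  rcases hm with ⟨h1, _, _⟩ | ⟨h1, h2, _⟩ | ⟨-, -, k, hk, hpos, rfl⟩ | ⟨h1, h2, _⟩
  · omega
  · omega
  · simp only at *
    have hk1 : k = 1 := by
      by_contra hne
      have hk2 : 2 ≤ k := by omega
      have : 2 * a ≤ k * a := Nat.mul_le_mul_right a hk2
      omega
    subst hk1
    have hba : a < b := by omega
    have hsub : b - 1 * a = b - a := by omega
    rw [hsub] at hpos ⊢
    have hcast : ((b - a : ℕ) : ℝ) = (b:ℝ) - a := by push_cast [hba.le]; ring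
    rintro (⟨e1, e2⟩ | ⟨e1, e2, e3⟩ | ⟨e1, e2, e3⟩)
    · simp only at e1 e2; omega
    · simp only at e1 e2 e3
      omega
    · simp only at e1 e2 e3
      rw [hcast] at e3
      have hphia : Φ * ((b:ℝ) - a) < a := by nlinarith [phi_sq, phi_pos]
      linarith
  · omega

lemma E_sound {x : ℕ × ℕ} {q : ℕ × ℕ} (h : EP x) (hm : euclidMove x q) : ¬ EP q := by
  obtain ⟨a, b⟩ := x
  rcases h with ⟨h1, h2⟩ | ⟨h1, h2, h3⟩ | ⟨h1, h2, h3⟩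
  · simp only at h1 h2
    subst h1; subst h2
    rcases hm with ⟨_, h, _⟩ | ⟨_, h, _⟩ | ⟨h, _⟩ | ⟨h, _⟩ <;> simp at h
  · exact E_sound_le h1 h2 h3 hm
  · intro hq
    exact E_sound_le h1 h2.le h3 (euclidMove_swap hm) (EP_swap hq)

lemma E_complete_le {a b : ℕ} (ha : 0 < a) (hab : a ≤ b) (hnp : ¬ (b:ℝ) < Φ * a) :
    ∃ y, euclidMove (a,b) y ∧ EP y := by
  have hirr := phi_mul_nat_irr ha
  have hgt : Φ * a < b := by
    rcases lt_or_eq_of_le (not_lt.mp hnp) with h | h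
    · exact h
    · exact absurd h (hirr.ne_nat b)
  have hapos : (0:ℝ) < a := by exact_mod_cast ha
  have hba : a < b := by
    have : (a:ℝ) < b := by nlinarith [one_lt_phi]
    exact_mod_cast this
  obtain ⟨d, r, hrlt, hsplit⟩ : ∃ d r, r < a ∧ d * a + r = b :=
    ⟨b/a, b%a, Nat.mod_lt _ ha, by rw [Nat.mul_comm]; exact Nat.div_add_mod b a⟩
  have hd1 : 1 ≤ d := by
    rcases Nat.eq_zero_or_pos d with h0 | h
    · subst h0; rw [zero_mul] at hsplit; omega
    · exact h
  by_cases hc : (Φ - 1) * a < (r:ℝ)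
  · -- move to (a, r)
    have hrpos : 0 < r := by
      have : (0:ℝ) < r := by nlinarith [one_lt_phi]
      exact_mod_cast this
    refine ⟨(a, r), ?_, ?_⟩
    · simp only [euclidMove]
      refine Or.inr (Or.inr (Or.inl ⟨ha, hab, d, hd1, ?_, ?_⟩))
      · omega
      · have hbd : b - d * a = r := by omega
        rw [hbd]
    · simp only [EP]
      refine Or.inr (Or.inr ⟨hrpos, hrlt, ?_⟩)
      have : Φ * ((Φ-1) * a) = a := by nlinarith [phi_sq]
      nlinarith [phi_pos]
  · -- move to (a, r + a)
    push_neg at hc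
    have hne : ((r:ℝ)) ≠ (Φ - 1) * a := by
      intro he
      have h2 : (Φ * a - a : ℝ) = r := by rw [he]; ring
      exact (hirr.sub_natCast a).ne_nat r h2
    have hclt : (r:ℝ) < (Φ - 1) * a := lt_of_le_of_ne hc hne
    have hd2 : 2 ≤ d := by
      by_contra h
      have hd1' : d = 1 := by omega
      subst hd1'
      rw [one_mul] at hsplit
      have hbar : b = a + r := by omega
      have : (b:ℝ) = a + r := by exact_mod_cast hbar
      nlinarith
    have hmul : (d-1) * a = d * a - a := by
      cases d with
      | zero => omega
      | succ n => simp [Nat.succ_sub_one, Nat.succ_mul]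
    have hda : a ≤ d * a := Nat.le_mul_of_pos_left a (by omega)
    refine ⟨(a, r + a), ?_, ?_⟩
    · simp only [euclidMove]
      refine Or.inr (Or.inr (Or.inl ⟨ha, hab, d - 1, by omega, ?_, ?_⟩))
      · rw [hmul]; omega
      · have hbd : b - (d-1)*a = r + a := by rw [hmul]; omega
        rw [hbd]
    · simp only [EP]
      refine Or.inr (Or.inl ⟨ha, by omega, ?_⟩)
      have hcast : ((r + a : ℕ) : ℝ) = (r:ℝ) + a := by push_cast; ring
      rw [hcast]
      nlinarith

lemma E_complete {x : ℕ × ℕ} (h : ¬ EP x) : ∃ y, euclidMove x y ∧ EP y := by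
  obtain ⟨a, b⟩ := x
  simp only [EP] at h
  rcases Nat.eq_zero_or_pos a with ha | ha
  · rcases Nat.eq_zero_or_pos b with hb | hb
    · exact absurd (Or.inl ⟨ha, hb⟩) h
    · exact ⟨(0,0), Or.inl ⟨ha, hb, rfl⟩, Or.inl ⟨rfl, rfl⟩⟩
  · rcases Nat.eq_zero_or_pos b with hb | hb
    · exact ⟨(0,0), Or.inr (Or.inl ⟨hb, ha, rfl⟩), Or.inl ⟨rfl, rfl⟩⟩
    · rcases le_or_gt a b with hab | hab
      · have hnp : ¬ ((b:ℝ)) < Φ * a := fun hlt => h (Or.inr (Or.inl ⟨ha, hab, hlt⟩))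
        exact E_complete_le ha hab hnp
      · have hnp : ¬ ((a:ℝ)) < Φ * b := fun hlt => h (Or.inr (Or.inr ⟨hb, hab, hlt⟩))
        obtain ⟨y, hy1, hy2⟩ := E_complete_le hb hab.le hnp
        exact ⟨(y.2, y.1), euclidMove_swap hy1, EP_swap (by obtain ⟨y1,y2⟩ := y; exact hy2)⟩

def Q : Bool × (ℕ × ℕ) → Prop
  | (true, x) => IsWP x.1 x.2 ∨ IsWP x.2 x.1
  | (false, x) => EP x

lemma notEP_of_WP {a b : ℕ} (h : IsWP a b) : ¬ EP (a,b) := by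
  have hlt := pair_lt h
  intro hep
  simp only [EP] at hep
  rcases Nat.eq_zero_or_pos a with rfl | ha
  · have hb := zero_pair h
    rcases hep with ⟨e1,e2⟩ | ⟨e1,e2,e3⟩ | ⟨e1,e2,e3⟩ <;> omega
  · have hc := small_pos_ceil h ha
    have hcr : ((b:ℕ):ℝ) = ((⌈Φ * (a:ℝ)⌉:ℤ):ℝ) := by exact_mod_cast hc
    have hgt : Φ * a < (b:ℝ) := by rw [hcr]; exact ceil_gt ha
    rcases hep with ⟨e1,e2⟩ | ⟨e1,e2,e3⟩ | ⟨e1,e2,e3⟩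
    · omega
    · linarith
    · omega

lemma nim_no {a b : ℕ} (h : IsWP a b) {y : ℕ × ℕ} (hm : nimMove (a,b) y) :
    ¬ (IsWP y.1 y.2 ∨ IsWP y.2 y.1) := by
  obtain ⟨c, d⟩ := y
  simp only [nimMove] at hm
  rcases hm with ⟨h1, h2⟩ | ⟨h1, h2⟩
  · subst h2
    rintro (hw | hw)
    · exact h1.ne (big_unique hw h)
    · exact cross h hw
  · subst h2
    rintro (hw | hw)
    · exact h1.ne (small_unique h hw).symm
    · exact cross hw h

lemma nimMove_swap {a b : ℕ} {y : ℕ × ℕ} (h : nimMove (a,b) y) : nimMove (b,a) (y.2,y.1) := by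
  obtain ⟨c,d⟩ := y
  simp only [nimMove] at *
  tauto

lemma N_complete_le {a b : ℕ} (hab : a ≤ b) (hnep : ¬ EP (a,b))
    (hnw : ¬ (IsWP a b ∨ IsWP b a)) :
    ∃ y, nimMove (a,b) y ∧ (IsWP y.1 y.2 ∨ IsWP y.2 y.1) := by
  rcases Nat.eq_zero_or_pos a with rfl | ha
  · rcases Nat.lt_or_ge b 2 with hb2 | hb2
    · exfalso
      interval_cases b
      · exact hnep (Or.inl ⟨rfl, rfl⟩)
      · exact hnw (Or.inl (Or.inl ⟨rfl, rfl⟩))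
    · exact ⟨(0,1), Or.inr ⟨by omega, rfl⟩, Or.inl (Or.inl ⟨rfl, rfl⟩)⟩
  · have hnlt : ¬ ((b:ℝ) < Φ * a) := fun hl => hnep (Or.inr (Or.inl ⟨ha, hab, hl⟩))
    have hirr := phi_mul_nat_irr ha
    have hgt : Φ * a < b := by
      rcases lt_or_eq_of_le (not_lt.mp hnlt) with h | h
      · exact h
      · exact absurd h (hirr.ne_nat b)
    obtain ⟨c, hc | hc⟩ := partner a
    · have hcle : (c:ℤ) ≤ b := by
        rw [small_pos_ceil hc ha]
        exact Int.ceil_le.mpr (by exact_mod_cast hgt.le)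
      have hcb : c ≠ b := fun he => hnw (Or.inl (he ▸ hc))
      exact ⟨(a, c), Or.inr ⟨by omega, rfl⟩, Or.inl hc⟩
    · have hca := pair_lt hc
      exact ⟨(a, c), Or.inr ⟨by omega, rfl⟩, Or.inr hc⟩

lemma Qfix (p : Bool × (ℕ × ℕ)) : Q p ↔ ∀ q, nimPushEuclidMove p q → ¬ Q q := by
  obtain ⟨s, a, b⟩ := p
  cases s
  · -- button already pushed : Euclid position
    constructor
    · intro hep q hm
      rcases hm with ⟨hs, -⟩ | ⟨-, hq1, hmv⟩
      · simp at hs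
      · obtain ⟨t, y⟩ := q
        simp only at hq1
        subst hq1
        exact E_sound hep hmv
    · intro hall
      by_contra hnep
      obtain ⟨y, hy1, hy2⟩ := E_complete hnep
      exact hall (false, y) (Or.inr ⟨rfl, rfl, hy1⟩) hy2
  · -- button not pushed
    constructor
    · rintro hw q hm
      rcases hm with ⟨-, ⟨hq1, hmv⟩ | hqe⟩ | ⟨hs, -⟩
      · obtain ⟨t, y⟩ := q
        simp only at hq1
        subst hq1
        show ¬ (IsWP y.1 y.2 ∨ IsWP y.2 y.1)
        rcases hw with hw | hw
        · exact nim_no hw hmv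
        · intro hq
          exact nim_no hw (nimMove_swap hmv) (by tauto)
      · subst hqe
        show ¬ EP (a,b)
        rcases hw with hw | hw
        · exact notEP_of_WP hw
        · intro hep; exact notEP_of_WP hw (EP_swap hep)
      · simp at hs
    · intro hall
      by_contra hnw
      by_cases hep : EP (a,b)
      · exact hall (false, (a,b)) (Or.inl ⟨rfl, Or.inr rfl⟩) hep
      · rcases le_or_gt a b with hab | hab
        · obtain ⟨y, hy1, hy2⟩ := N_complete_le hab hep hnw
          exact hall (true, y) (Or.inl ⟨rfl, Or.inl ⟨rfl, hy1⟩⟩) hy2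
        · have hnep' : ¬ EP (b,a) := fun h => hep (EP_swap h)
          have hnw' : ¬ (IsWP b a ∨ IsWP a b) := fun h => hnw (by tauto)
          obtain ⟨y, hy1, hy2⟩ := N_complete_le hab.le hnep' hnw'
          exact hall (true, (y.2, y.1)) (Or.inl ⟨rfl, Or.inl ⟨rfl, nimMove_swap hy1⟩⟩)
            (Or.symm hy2)

def rank (p : Bool × (ℕ × ℕ)) : ℕ := p.2.1 + p.2.2 + (if p.1 = true then 1 else 0)

lemma move_rank {p q : Bool × (ℕ × ℕ)} (h : nimPushEuclidMove p q) : rank q < rank p := by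
  obtain ⟨s, a, b⟩ := p
  obtain ⟨t, c, d⟩ := q
  rcases h with ⟨hs, ⟨ht, hmv⟩ | hqe⟩ | ⟨hs, ht, hmv⟩
  · simp only at hs ht
    subst hs; subst ht
    simp only [nimMove] at hmv
    simp only [rank]
    rcases hmv with ⟨h1, h2⟩ | ⟨h1, h2⟩ <;> simp <;> omega
  · simp only at hs
    subst hs
    injection hqe with e1 e2
    injection e2 with e3 e4
    subst e1; subst e3; subst e4
    simp [rank]
  · simp only at hs ht
    subst hs; subst ht
    simp only [euclidMove] at hmv
    simp only [rank]
    rcases hmv with ⟨h1,h2,h3⟩|⟨h1,h2,h3⟩|⟨h1,h2,k,hk,hpos,h3⟩|⟨h1,h2,k,hk,hpos,h3⟩ <;>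
      (simp only [Prod.mk.injEq] at h3; obtain ⟨rfl, rfl⟩ := h3; simp)
    · omega
    · omega
    · have hka : c ≤ k * c := Nat.le_mul_of_pos_left c (by omega)
      omega
    · have hkb : d ≤ k * d := Nat.le_mul_of_pos_left d (by omega)
      omega

lemma P_eq_Q (P : Bool × (ℕ × ℕ) → Prop)
    (hP : ∀ p, P p ↔ ∀ q, nimPushEuclidMove p q → ¬ P q) :
    ∀ p, P p ↔ Q p := by
  have H : ∀ N p, rank p < N → (P p ↔ Q p) := by
    intro N
    induction N with
    | zero => exact fun p h => absurd h (Nat.not_lt_zero _)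
    | succ N ih =>
      intro p h
      rw [hP p, Qfix p]
      exact forall_congr' fun q => imp_congr_right fun hm =>
        not_congr (ih q (by have := move_rank hm; omega))
  exact fun p => H (rank p + 1) p (Nat.lt_succ_self _)

theorem nim_push_euclid_P_positions
    (P : Bool × (ℕ × ℕ) → Prop)
    (hP : ∀ p, P p ↔ ∀ q, nimPushEuclidMove p q → ¬ P q) :
    P (true, (0, 1)) ∧
    ∀ a b : ℕ, 0 < a → a ≤ b → (b : ℤ) = ⌈Φ * (a : ℝ)⌉ →
      (((∃ m : ℕ, (a : ℤ) = ⌊Φ * (m : ℝ)⌋ ∧ b = a + m) ∧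
          ¬ ∃ k : ℕ, a = Nat.fib (2 * k + 1) - 1 ∧ b = Nat.fib (2 * k + 2) - 1) ∨
        (∃ k : ℕ, a = Nat.fib (2 * k + 2) - 1 ∧ b = Nat.fib (2 * k + 3) - 1)) →
      P (true, (a, b)) := by
  have hpq := P_eq_Q P hP
  constructor
  · exact (hpq _).mpr (Or.inl (Or.inl ⟨rfl, rfl⟩))
  · intro a b ha hab hceil hbr
    exact (hpq _).mpr (Or.inl (Or.inr ⟨ha, hceil, hbr⟩))
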